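/- If n ≠ m are integers, then the canonical-form integer games n and m are incomparable modulo the universe E of dead-ending games: neither n ≧ m (mod E) nor n ≦ m (mod E) holds. -/

import Mathlib

universe u

namespace SetTheory

/-- The type of pre-games, as defined in Mathlib (December 2024), since removed from Mathlib. -/
inductive PGame : Type (u + 1)
  | mk : ∀ α β : Type u, (α → PGame) → (β → PGame) → PGame

namespace PGame

def LeftMoves : PGame → Type u
  | mk l _ _ _ => l

def RightMoves : PGame → Type u
  | mk _ r _ _ => r

def moveLeft : ∀ g : PGame, LeftMoves g → PGame
  | mk _l _ L _ => L

def moveRight : ∀ g : PGame, RightMoves g → PGame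
  | mk _ _r _ R => R

inductive IsOption : PGame → PGame → Prop
  | moveLeft {x : PGame} (i : x.LeftMoves) : IsOption (x.moveLeft i) x
  | moveRight {x : PGame} (i : x.RightMoves) : IsOption (x.moveRight i) x

instance : Zero PGame :=
  ⟨⟨PEmpty, PEmpty, PEmpty.elim, PEmpty.elim⟩⟩

def neg : PGame → PGame
  | ⟨l, r, L, R⟩ => ⟨r, l, fun i => neg (R i), fun i => neg (L i)⟩

instance : Neg PGame :=
  ⟨neg⟩

noncomputable instance : Add PGame.{u} :=
  ⟨fun x y => by
    induction x generalizing y with | mk xl xr _ _ IHxl IHxr => _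
    induction y with | mk yl yr yL yR IHyl IHyr => _
    have y := mk yl yr yL yR
    refine ⟨xl ⊕ yl, xr ⊕ yr, Sum.rec ?_ ?_, Sum.rec ?_ ?_⟩
    · exact fun i => IHxl i y
    · exact IHyl
    · exact fun i => IHxr i y
    · exact IHyr⟩

end PGame

end SetTheory

open SetTheory

namespace Misere

/-- `F` is a follower of `G`: reachable from `G` by a (possibly empty) sequence of moves. -/
def Follower (F G : PGame) : Prop := Relation.ReflTransGen PGame.IsOption F G

def IsLeftEnd (G : PGame) : Prop := IsEmpty G.LeftMoves
def IsRightEnd (G : PGame) : Prop := IsEmpty G.RightMoves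

/-- A dead left end: every follower (including itself) is a left end. -/
def DeadLeftEnd (G : PGame) : Prop := ∀ F, Follower F G → IsLeftEnd F
def DeadRightEnd (G : PGame) : Prop := ∀ F, Follower F G → IsRightEnd F
def DeadEnd (G : PGame) : Prop := DeadLeftEnd G ∨ DeadRightEnd G

/-- A game is dead-ending if every end follower is a dead end. -/
def DeadEnding (G : PGame) : Prop :=
  ∀ F, Follower F G → (IsLeftEnd F → DeadLeftEnd F) ∧ (IsRightEnd F → DeadRightEnd F)

/-- The universe of dead-ending games. -/
def E : Set PGame := {G | DeadEnding G}

/-- `(misereWins G).1` : Left, moving first, wins `G` under misère play;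
    `(misereWins G).2` : Right, moving first, wins `G` under misère play. -/
def misereWins : PGame → Prop × Prop
  | PGame.mk l r L R =>
      (IsEmpty l ∨ ∃ i, ¬ (misereWins (L i)).2,
       IsEmpty r ∨ ∃ j, ¬ (misereWins (R j)).1)

def LeftWinsGF (G : PGame) : Prop := (misereWins G).1
def RightWinsGF (G : PGame) : Prop := (misereWins G).2

inductive MOutcome : Type
  | L | N | P | R
deriving DecidableEq

/-- Partial order on misère outcomes: `R` minimal, `L` maximal, `N` and `P` incomparable. -/
def MOutcome.le : MOutcome → MOutcome → Prop
  | .R, _ => True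
  | _, .L => True
  | a, b => a = b

instance : LE MOutcome := ⟨MOutcome.le⟩

/-- The misère outcome of a game. -/
noncomputable def outcome (G : PGame) : MOutcome := by
  classical
  exact if LeftWinsGF G then (if RightWinsGF G then .N else .L)
        else (if RightWinsGF G then .R else .P)

/-- `G ≡ H (mod U)`. -/
def equivMod (U : Set PGame) (G H : PGame) : Prop :=
  ∀ X ∈ U, outcome (G + X) = outcome (H + X)

/-- `G ≧ H (mod U)`. -/
def geMod (U : Set PGame) (G H : PGame) : Prop :=
  ∀ X ∈ U, outcome (H + X) ≤ outcome (G + X)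

/-- `LeftChain G n`: there is a sequence of `n` consecutive Left moves from `G`
ending at the zero position. -/
inductive LeftChain : PGame → ℕ → Prop
  | zero (G : PGame) : IsLeftEnd G → IsRightEnd G → LeftChain G 0
  | succ (G : PGame) (i : G.LeftMoves) (n : ℕ) :
      LeftChain (G.moveLeft i) n → LeftChain G (n + 1)

inductive RightChain : PGame → ℕ → Prop
  | zero (G : PGame) : IsLeftEnd G → IsRightEnd G → RightChain G 0
  | succ (G : PGame) (j : G.RightMoves) (n : ℕ) :
      RightChain (G.moveRight j) n → RightChain G (n + 1)

/-- Left-length: minimum number of consecutive Left moves needed to reach zero. -/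
noncomputable def leftLength (G : PGame) : ℕ := sInf {n | LeftChain G n}

/-- Right-length: minimum number of consecutive Right moves needed to reach zero. -/
noncomputable def rightLength (G : PGame) : ℕ := sInf {n | RightChain G n}

/-- Normal-play canonical form of a nonnegative integer. -/
def natGame : ℕ → PGame
  | 0 => 0
  | n + 1 => PGame.mk PUnit PEmpty (fun _ => natGame n) PEmpty.elim

/-- Normal-play canonical form of an integer (negatives are conjugates). -/
def intGame (n : ℤ) : PGame :=
  if 0 ≤ n then natGame n.toNat else -natGame (-n).toNat

/-- Normal-play canonical form of the dyadic rational `m / 2 ^ j`. -/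
def dyadicGame : ℤ → ℕ → PGame
  | m, 0 => intGame m
  | m, j + 1 =>
      if m % 2 = 0 then dyadicGame (m / 2) j
      else PGame.mk PUnit PUnit (fun _ => dyadicGame ((m - 1) / 2) j)
            (fun _ => dyadicGame ((m + 1) / 2) j)

/-- The closure of dead ends: finite disjunctive sums of dead ends. -/
def DeadEndClosure : Set PGame :=
  {G | ∃ l : List PGame, (∀ x ∈ l, DeadEnd x) ∧ G = l.sum}

end Misere

namespace SetTheory.PGame

theorem leftMoves_mk {xl xr : Type u} (xL : xl → PGame) (xR : xr → PGame) :
    (mk xl xr xL xR).LeftMoves = xl := rfl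

theorem rightMoves_mk {xl xr : Type u} (xL : xl → PGame) (xR : xr → PGame) :
    (mk xl xr xL xR).RightMoves = xr := rfl

theorem neg_def {xl xr : Type u} {xL : xl → PGame} {xR : xr → PGame} :
    -mk xl xr xL xR = mk xr xl (fun j => -xR j) fun i => -xL i := rfl

instance : NegZeroClass PGame where
  neg_zero := by
    show PGame.mk PEmpty PEmpty _ _ = PGame.mk PEmpty PEmpty _ _
    congr 1 <;> funext i <;> exact i.elim

theorem leftMoves_add (x y : PGame.{u}) : (x + y).LeftMoves = (x.LeftMoves ⊕ y.LeftMoves) := by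
  cases x; cases y; rfl

theorem rightMoves_add (x y : PGame.{u}) : (x + y).RightMoves = (x.RightMoves ⊕ y.RightMoves) := by
  cases x; cases y; rfl

def toLeftMovesAdd {x y : PGame} : x.LeftMoves ⊕ y.LeftMoves ≃ (x + y).LeftMoves :=
  Equiv.cast (leftMoves_add x y).symm

def toRightMovesAdd {x y : PGame} : x.RightMoves ⊕ y.RightMoves ≃ (x + y).RightMoves :=
  Equiv.cast (rightMoves_add x y).symm

theorem add_moveLeft_inl (x : PGame) {y : PGame} (i) :
    (x + y).moveLeft (toLeftMovesAdd (Sum.inl i)) = x.moveLeft i + y := by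
  cases x; cases y; rfl

theorem add_moveRight_inl (x : PGame) {y : PGame} (i) :
    (x + y).moveRight (toRightMovesAdd (Sum.inl i)) = x.moveRight i + y := by
  cases x; cases y; rfl

theorem add_moveLeft_inr (x : PGame) {y : PGame} (i) :
    (x + y).moveLeft (toLeftMovesAdd (Sum.inr i)) = x + y.moveLeft i := by
  cases x; cases y; rfl

theorem add_moveRight_inr (x : PGame) {y : PGame} (i) :
    (x + y).moveRight (toRightMovesAdd (Sum.inr i)) = x + y.moveRight i := by
  cases x; cases y; rfl

end SetTheory.PGame

namespace Misere

namespace Aux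

open PGame

theorem leftWinsGF_iff (G : PGame) :
    LeftWinsGF G ↔ IsEmpty G.LeftMoves ∨ ∃ i, ¬ RightWinsGF (G.moveLeft i) := by
  cases G with
  | mk l r L R => rw [LeftWinsGF, misereWins]; rfl
theorem rightWinsGF_iff (G : PGame) :
    RightWinsGF G ↔ IsEmpty G.RightMoves ∨ ∃ j, ¬ LeftWinsGF (G.moveRight j) := by
  cases G with
  | mk l r L R => rw [RightWinsGF, misereWins]; rfl
theorem isEmpty_leftMoves_add_iff (x y : PGame) :
    IsEmpty (x + y).LeftMoves ↔ IsEmpty x.LeftMoves ∧ IsEmpty y.LeftMoves := by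
  rw [leftMoves_add]; exact isEmpty_sum
theorem isEmpty_rightMoves_add_iff (x y : PGame) :
    IsEmpty (x + y).RightMoves ↔ IsEmpty x.RightMoves ∧ IsEmpty y.RightMoves := by
  rw [rightMoves_add]; exact isEmpty_sum
theorem exists_left_add (P : PGame → Prop) (x y : PGame) :
    (∃ i, P ((x + y).moveLeft i)) ↔ (∃ i, P (x.moveLeft i + y)) ∨ ∃ i, P (x + y.moveLeft i) := by
  constructor
  · rintro ⟨k, hk⟩
    obtain ⟨i, rfl⟩ := toLeftMovesAdd.surjective k
    cases i with
    | inl i => exact Or.inl ⟨i, by rwa [add_moveLeft_inl] at hk⟩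
    | inr i => exact Or.inr ⟨i, by rwa [add_moveLeft_inr] at hk⟩
  · rintro (⟨i, hi⟩ | ⟨i, hi⟩)
    · exact ⟨toLeftMovesAdd (Sum.inl i), by rwa [add_moveLeft_inl]⟩
    · exact ⟨toLeftMovesAdd (Sum.inr i), by rwa [add_moveLeft_inr]⟩
theorem exists_right_add (P : PGame → Prop) (x y : PGame) :
    (∃ i, P ((x + y).moveRight i)) ↔ (∃ i, P (x.moveRight i + y)) ∨ ∃ i, P (x + y.moveRight i) := by
  constructor
  · rintro ⟨k, hk⟩
    obtain ⟨i, rfl⟩ := toRightMovesAdd.surjective k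
    cases i with
    | inl i => exact Or.inl ⟨i, by rwa [add_moveRight_inl] at hk⟩
    | inr i => exact Or.inr ⟨i, by rwa [add_moveRight_inr] at hk⟩
  · rintro (⟨i, hi⟩ | ⟨i, hi⟩)
    · exact ⟨toRightMovesAdd (Sum.inl i), by rwa [add_moveRight_inl]⟩
    · exact ⟨toRightMovesAdd (Sum.inr i), by rwa [add_moveRight_inr]⟩

theorem leftWinsGF_add3 (A B C : PGame) :
    LeftWinsGF (A + (B + C)) ↔
      (IsEmpty A.LeftMoves ∧ IsEmpty B.LeftMoves ∧ IsEmpty C.LeftMoves)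
      ∨ (∃ i, ¬ RightWinsGF (A.moveLeft i + (B + C)))
      ∨ (∃ i, ¬ RightWinsGF (A + (B.moveLeft i + C)))
      ∨ (∃ i, ¬ RightWinsGF (A + (B + C.moveLeft i))) := by
  rw [leftWinsGF_iff, isEmpty_leftMoves_add_iff, isEmpty_leftMoves_add_iff,
      exists_left_add (fun g => ¬ RightWinsGF g),
      exists_left_add (fun g => ¬ RightWinsGF (A + g))]

theorem rightWinsGF_add3 (A B C : PGame) :
    RightWinsGF (A + (B + C)) ↔
      (IsEmpty A.RightMoves ∧ IsEmpty B.RightMoves ∧ IsEmpty C.RightMoves)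
      ∨ (∃ i, ¬ LeftWinsGF (A.moveRight i + (B + C)))
      ∨ (∃ i, ¬ LeftWinsGF (A + (B.moveRight i + C)))
      ∨ (∃ i, ¬ LeftWinsGF (A + (B + C.moveRight i))) := by
  rw [rightWinsGF_iff, isEmpty_rightMoves_add_iff, isEmpty_rightMoves_add_iff,
      exists_right_add (fun g => ¬ LeftWinsGF g),
      exists_right_add (fun g => ¬ LeftWinsGF (A + g))]

theorem pempty_fun_eq {X : Type*} (f g : PEmpty → X) : f = g := funext fun x => x.elim

theorem intGame_ofNat (k : ℕ) : intGame (k : ℤ) = natGame k := by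
  rw [intGame, if_pos (by omega)]; norm_num

theorem neg_natGame (k : ℕ) : -natGame k = intGame (-(k : ℤ)) := by
  cases k with
  | zero =>
    show -natGame 0 = intGame 0
    rw [show natGame 0 = (0:PGame) from rfl, neg_zero]; rfl
  | succ k =>
    rw [intGame, if_neg (by omega)]
    norm_num

theorem intGame_pos {c : ℤ} (h : 0 < c) :
    intGame c = PGame.mk PUnit PEmpty (fun _ => intGame (c - 1)) PEmpty.elim := by
  obtain ⟨k, rfl⟩ : ∃ k : ℕ, c = (k : ℤ) + 1 := ⟨(c - 1).toNat, by omega⟩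
  rw [intGame, if_pos (by omega)]
  have h2 : ((k : ℤ) + 1).toNat = k + 1 := by omega
  rw [h2, natGame]
  congr 1
  rw [show (k : ℤ) + 1 - 1 = (k : ℤ) from by ring, intGame_ofNat]

theorem intGame_negdef {c : ℤ} (h : c < 0) :
    intGame c = PGame.mk PEmpty PUnit PEmpty.elim (fun _ => intGame (c + 1)) := by
  rw [intGame, if_neg (by omega)]
  obtain ⟨k, hk⟩ : ∃ k : ℕ, (-c).toNat = k + 1 := ⟨(-c).toNat - 1, by omega⟩
  rw [hk, natGame, PGame.neg_def]
  congr 1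
  · exact pempty_fun_eq _ _
  · funext _
    rw [neg_natGame]
    congr 1
    omega

theorem intGame_zero : intGame 0 = natGame 0 := intGame_ofNat 0

def lam : ℕ → PGame
  | 0 => PGame.mk PEmpty PUnit PEmpty.elim (fun _ => natGame 0)
  | t + 1 => PGame.mk PUnit PUnit (fun _ => natGame 0) (fun _ => lam t)

def mug : Option ℕ → PGame
  | none => natGame 0
  | some t => lam t

def rank : Option ℕ → ℕ
  | none => 0
  | some t => t + 1

/- ### move/emptiness transport lemmas -/

theorem pe_isEmpty : IsEmpty PEmpty.{u+1} := ⟨PEmpty.elim⟩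
theorem pu_not_isEmpty : ¬ IsEmpty PUnit.{u+1} := fun h => h.elim ⟨⟩

theorem isEmpty_left_int (c : ℤ) : IsEmpty (intGame c).LeftMoves ↔ c ≤ 0 := by
  rcases lt_trichotomy c 0 with h | rfl | h
  · rw [intGame_negdef h, leftMoves_mk]; exact iff_of_true pe_isEmpty (by omega)
  · rw [intGame_zero]; exact iff_of_true pe_isEmpty (by omega)
  · rw [intGame_pos h, leftMoves_mk]; exact iff_of_false pu_not_isEmpty (by omega)

theorem isEmpty_right_int (c : ℤ) : IsEmpty (intGame c).RightMoves ↔ 0 ≤ c := by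
  rcases lt_trichotomy c 0 with h | rfl | h
  · rw [intGame_negdef h, rightMoves_mk]; exact iff_of_false pu_not_isEmpty (by omega)
  · rw [intGame_zero]; exact iff_of_true pe_isEmpty (by omega)
  · rw [intGame_pos h, rightMoves_mk]; exact iff_of_true pe_isEmpty (by omega)

theorem isEmpty_left_nat (j : ℕ) : IsEmpty (natGame j).LeftMoves ↔ j = 0 := by
  cases j with
  | zero => exact iff_of_true pe_isEmpty rfl
  | succ j => rw [natGame, leftMoves_mk]; exact iff_of_false pu_not_isEmpty (by omega)

theorem isEmpty_right_nat (j : ℕ) : IsEmpty (natGame j).RightMoves := by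
  cases j with
  | zero => exact pe_isEmpty
  | succ j => rw [natGame, rightMoves_mk]; exact pe_isEmpty

theorem isEmpty_left_lam (t : ℕ) : IsEmpty (lam t).LeftMoves ↔ t = 0 := by
  cases t with
  | zero => rw [lam, leftMoves_mk]; exact iff_of_true pe_isEmpty rfl
  | succ t => rw [lam, leftMoves_mk]; exact iff_of_false pu_not_isEmpty (by omega)

theorem not_isEmpty_right_lam (t : ℕ) : ¬ IsEmpty (lam t).RightMoves := by
  cases t with
  | zero => rw [lam, rightMoves_mk]; exact pu_not_isEmpty
  | succ t => rw [lam, rightMoves_mk]; exact pu_not_isEmpty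

theorem exists_moveLeft_int (c : ℤ) (P : PGame → Prop) :
    (∃ i, P ((intGame c).moveLeft i)) ↔ 0 < c ∧ P (intGame (c - 1)) := by
  rcases lt_trichotomy c 0 with h | rfl | h
  · rw [intGame_negdef h]
    constructor
    · rintro ⟨i, -⟩; exact i.elim
    · rintro ⟨hc, -⟩; omega
  · rw [intGame_zero]
    constructor
    · rintro ⟨i, -⟩; exact i.elim
    · rintro ⟨hc, -⟩; omega
  · rw [intGame_pos h]
    constructor
    · rintro ⟨i, hi⟩; exact ⟨h, hi⟩
    · rintro ⟨-, hp⟩; exact ⟨⟨⟩, hp⟩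

theorem exists_moveRight_int (c : ℤ) (P : PGame → Prop) :
    (∃ i, P ((intGame c).moveRight i)) ↔ c < 0 ∧ P (intGame (c + 1)) := by
  rcases lt_trichotomy c 0 with h | rfl | h
  · rw [intGame_negdef h]
    constructor
    · rintro ⟨i, hi⟩; exact ⟨h, hi⟩
    · rintro ⟨-, hp⟩; exact ⟨⟨⟩, hp⟩
  · rw [intGame_zero]
    constructor
    · rintro ⟨i, -⟩; exact i.elim
    · rintro ⟨hc, -⟩; omega
  · rw [intGame_pos h]
    constructor
    · rintro ⟨i, -⟩; exact i.elim
    · rintro ⟨hc, -⟩; omega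

theorem exists_moveLeft_nat (j : ℕ) (P : PGame → Prop) :
    (∃ i, P ((natGame j).moveLeft i)) ↔ 0 < j ∧ P (natGame (j - 1)) := by
  cases j with
  | zero =>
    constructor
    · rintro ⟨i, -⟩; exact i.elim
    · rintro ⟨hc, -⟩; omega
  | succ j =>
    rw [natGame]
    constructor
    · rintro ⟨i, hi⟩; exact ⟨by omega, hi⟩
    · rintro ⟨-, hp⟩; exact ⟨⟨⟩, hp⟩

theorem exists_moveRight_nat (j : ℕ) (P : PGame → Prop) :
    (∃ i, P ((natGame j).moveRight i)) ↔ False := by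
  cases j with
  | zero =>
    constructor
    · rintro ⟨i, -⟩; exact i.elim
    · exact False.elim
  | succ j =>
    rw [natGame]
    constructor
    · rintro ⟨i, -⟩; exact i.elim
    · exact False.elim

theorem exists_moveLeft_lam (t : ℕ) (P : PGame → Prop) :
    (∃ i, P ((lam t).moveLeft i)) ↔ 0 < t ∧ P (natGame 0) := by
  cases t with
  | zero =>
    rw [lam]
    constructor
    · rintro ⟨i, -⟩; exact i.elim
    · rintro ⟨hc, -⟩; omega
  | succ t =>
    rw [lam]
    constructor
    · rintro ⟨i, hi⟩; exact ⟨by omega, hi⟩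
    · rintro ⟨-, hp⟩; exact ⟨⟨⟩, hp⟩

theorem exists_moveRight_lam0 (P : PGame → Prop) :
    (∃ i, P ((lam 0).moveRight i)) ↔ P (natGame 0) := by
  rw [lam]
  constructor
  · rintro ⟨i, hi⟩; exact hi
  · intro hp; exact ⟨⟨⟩, hp⟩

theorem exists_moveRight_lam_succ (t : ℕ) (P : PGame → Prop) :
    (∃ i, P ((lam (t + 1)).moveRight i)) ↔ P (lam t) := by
  rw [lam]
  constructor
  · rintro ⟨i, hi⟩; exact hi
  · intro hp; exact ⟨⟨⟩, hp⟩


def specL : ℤ → Option ℕ → Prop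
  | a, none => a ≤ 0
  | a, some t => a ≤ -1 ∨ a = t ∨ a = (t : ℤ) + 1

def specR : ℤ → Option ℕ → Prop
  | a, none => 0 ≤ a
  | a, some t => -1 ≤ a ∧ a ≠ (t : ℤ) - 1 ∧ a ≠ (t : ℤ)

theorem isEmpty_right_nat' (j : ℕ) : IsEmpty (natGame j).RightMoves ↔ True :=
  iff_of_true (isEmpty_right_nat j) trivial

theorem isEmpty_right_lam' (t : ℕ) : IsEmpty (lam t).RightMoves ↔ False :=
  iff_of_false (not_isEmpty_right_lam t) id

theorem master (c : ℤ) (j : ℕ) (μ : Option ℕ) :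
    (LeftWinsGF (intGame c + (natGame j + mug μ) : PGame.{u}) ↔ specL (c + j) μ) ∧
    (RightWinsGF (intGame c + (natGame j + mug μ) : PGame.{u}) ↔ specR (c + j) μ) := by
  rcases μ with - | t
  · -- μ = none : mug = natGame 0
    simp only [mug]
    constructor
    · rw [leftWinsGF_add3, isEmpty_left_int, isEmpty_left_nat, isEmpty_left_nat 0,
        exists_moveLeft_int c (fun g => ¬ RightWinsGF (g + (natGame j + natGame 0))),
        exists_moveLeft_nat j (fun g => ¬ RightWinsGF (intGame c + (g + natGame 0))),
        exists_moveLeft_nat 0 (fun g => ¬ RightWinsGF (intGame c + (natGame j + g))),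
        show (0 < c ∧ ¬ RightWinsGF (intGame (c - 1) + (natGame j + natGame 0) : PGame.{u})) ↔
            (0 < c ∧ ¬ specR (c - 1 + j) none) from
          and_congr_right (fun hc : 0 < c => not_congr (master (c - 1) j none).2),
        show (0 < j ∧ ¬ RightWinsGF (intGame c + (natGame (j - 1) + natGame 0) : PGame.{u})) ↔
            (0 < j ∧ ¬ specR (c + (j - 1 : ℕ)) none) from
          and_congr_right (fun hj : 0 < j => not_congr (master c (j - 1) none).2)]
      simp only [specL, specR, lt_self_iff_false, false_and, or_false, and_true, true_and,
        and_false, false_or, eq_self_iff_true]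
      omega
    · rw [rightWinsGF_add3, isEmpty_right_int, isEmpty_right_nat', isEmpty_right_nat' 0,
        exists_moveRight_int c (fun g => ¬ LeftWinsGF (g + (natGame j + natGame 0))),
        exists_moveRight_nat j (fun g => ¬ LeftWinsGF (intGame c + (g + natGame 0))),
        exists_moveRight_nat 0 (fun g => ¬ LeftWinsGF (intGame c + (natGame j + g))),
        show (c < 0 ∧ ¬ LeftWinsGF (intGame (c + 1) + (natGame j + natGame 0) : PGame.{u})) ↔
            (c < 0 ∧ ¬ specL (c + 1 + j) none) from
          and_congr_right (fun hc : c < 0 => not_congr (master (c + 1) j none).1)]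
      simp only [specL, specR, lt_self_iff_false, false_and, or_false, and_true, true_and,
        and_false, false_or, eq_self_iff_true]
      omega
  · -- μ = some t : mug = lam t
    simp only [mug]
    constructor
    · have h0 : RightWinsGF (intGame c + (natGame j + natGame 0) : PGame.{u}) ↔ specR (c + j) none :=
        (master c j none).2
      rw [leftWinsGF_add3, isEmpty_left_int, isEmpty_left_nat, isEmpty_left_lam,
        exists_moveLeft_int c (fun g => ¬ RightWinsGF (g + (natGame j + lam t))),
        exists_moveLeft_nat j (fun g => ¬ RightWinsGF (intGame c + (g + lam t))),
        exists_moveLeft_lam t (fun g => ¬ RightWinsGF (intGame c + (natGame j + g))),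
        show (0 < c ∧ ¬ RightWinsGF (intGame (c - 1) + (natGame j + lam t) : PGame.{u})) ↔
            (0 < c ∧ ¬ specR (c - 1 + j) (some t)) from
          and_congr_right (fun hc : 0 < c => not_congr (master (c - 1) j (some t)).2),
        show (0 < j ∧ ¬ RightWinsGF (intGame c + (natGame (j - 1) + lam t) : PGame.{u})) ↔
            (0 < j ∧ ¬ specR (c + (j - 1 : ℕ)) (some t)) from
          and_congr_right (fun hj : 0 < j => not_congr (master c (j - 1) (some t)).2),
        h0]
      simp only [specL, specR]
      omega
    · cases t with
      | zero =>
        have h0 : LeftWinsGF (intGame c + (natGame j + natGame 0) : PGame.{u}) ↔ specL (c + j) none :=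
          (master c j none).1
        rw [rightWinsGF_add3, isEmpty_right_int, isEmpty_right_nat', isEmpty_right_lam',
          exists_moveRight_int c (fun g => ¬ LeftWinsGF (g + (natGame j + lam 0))),
          exists_moveRight_nat j (fun g => ¬ LeftWinsGF (intGame c + (g + lam 0))),
          exists_moveRight_lam0 (fun g => ¬ LeftWinsGF (intGame c + (natGame j + g))),
          show (c < 0 ∧ ¬ LeftWinsGF (intGame (c + 1) + (natGame j + lam 0) : PGame.{u})) ↔
              (c < 0 ∧ ¬ specL (c + 1 + j) (some 0)) from
            and_congr_right (fun hc : c < 0 => not_congr (master (c + 1) j (some 0)).1),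
          h0]
        simp only [specL, specR, lt_self_iff_false, false_and, or_false, and_true, true_and,
        and_false, false_or, eq_self_iff_true]
        omega
      | succ s =>
        have hs : LeftWinsGF (intGame c + (natGame j + lam s) : PGame.{u}) ↔ specL (c + j) (some s) :=
          (master c j (some s)).1
        rw [rightWinsGF_add3, isEmpty_right_int, isEmpty_right_nat', isEmpty_right_lam',
          exists_moveRight_int c (fun g => ¬ LeftWinsGF (g + (natGame j + lam (s + 1)))),
          exists_moveRight_nat j (fun g => ¬ LeftWinsGF (intGame c + (g + lam (s + 1)))),
          exists_moveRight_lam_succ s (fun g => ¬ LeftWinsGF (intGame c + (natGame j + g))),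
          show (c < 0 ∧ ¬ LeftWinsGF (intGame (c + 1) + (natGame j + lam (s + 1)) : PGame.{u})) ↔
              (c < 0 ∧ ¬ specL (c + 1 + j) (some (s + 1))) from
            and_congr_right (fun hc : c < 0 => not_congr (master (c + 1) j (some (s + 1))).1),
          hs]
        simp only [specL, specR, lt_self_iff_false, false_and, or_false, and_true, true_and,
        and_false, false_or, eq_self_iff_true]
        push_cast
        omega
termination_by c.natAbs + j + rank μ
decreasing_by
  all_goals simp only [rank]
  all_goals omega



theorem outcome_L {G : PGame} (h1 : LeftWinsGF G) (h2 : ¬ RightWinsGF G) :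
    outcome G = MOutcome.L := by
  unfold outcome
  rw [if_pos h1, if_neg h2]

theorem outcome_ne_L_of_R {G : PGame} (h : RightWinsGF G) : outcome G ≠ MOutcome.L := by
  unfold outcome
  by_cases hl : LeftWinsGF G
  · rw [if_pos hl, if_pos h]; exact fun hh => MOutcome.noConfusion hh
  · rw [if_neg hl, if_pos h]; exact fun hh => MOutcome.noConfusion hh

theorem outcome_ne_L_of_nL {G : PGame} (h : ¬ LeftWinsGF G) : outcome G ≠ MOutcome.L := by
  unfold outcome
  rw [if_neg h]
  by_cases hr : RightWinsGF G
  · rw [if_pos hr]; exact fun hh => MOutcome.noConfusion hh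
  · rw [if_neg hr]; exact fun hh => MOutcome.noConfusion hh

theorem not_le_L {b : MOutcome} (h : b ≠ MOutcome.L) : ¬ (MOutcome.L ≤ b) := by
  cases b with
  | L => exact absurd rfl h
  | N => exact fun hh => MOutcome.noConfusion (show MOutcome.L = MOutcome.N from hh)
  | P => exact fun hh => MOutcome.noConfusion (show MOutcome.L = MOutcome.P from hh)
  | R => exact fun hh => MOutcome.noConfusion (show MOutcome.L = MOutcome.R from hh)

/- ### dead-ending machinery -/

theorem isOption_add {b x y : PGame} (h : PGame.IsOption b (x + y)) :
    (∃ x', PGame.IsOption x' x ∧ b = x' + y) ∨ (∃ y', PGame.IsOption y' y ∧ b = x + y') := by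
  cases h with
  | moveLeft i =>
    obtain ⟨k, rfl⟩ := toLeftMovesAdd.surjective i
    cases k with
    | inl i => exact Or.inl ⟨_, IsOption.moveLeft i, (add_moveLeft_inl _ _).symm ▸ rfl⟩
    | inr i => exact Or.inr ⟨_, IsOption.moveLeft i, (add_moveLeft_inr _ _).symm ▸ rfl⟩
  | moveRight i =>
    obtain ⟨k, rfl⟩ := toRightMovesAdd.surjective i
    cases k with
    | inl i => exact Or.inl ⟨_, IsOption.moveRight i, (add_moveRight_inl _ _).symm ▸ rfl⟩
    | inr i => exact Or.inr ⟨_, IsOption.moveRight i, (add_moveRight_inr _ _).symm ▸ rfl⟩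

theorem follower_add {F G : PGame} (h : Follower F G) :
    ∀ x y : PGame, G = x + y → ∃ a b, Follower a x ∧ Follower b y ∧ F = a + b := by
  induction h with
  | refl =>
    rintro x y rfl
    exact ⟨x, y, Relation.ReflTransGen.refl, Relation.ReflTransGen.refl, rfl⟩
  | tail h1 h2 ih =>
    rintro x y rfl
    rcases isOption_add h2 with ⟨x', hx', rfl⟩ | ⟨y', hy', rfl⟩
    · obtain ⟨a, b, fa, fb, rfl⟩ := ih x' y rfl
      exact ⟨a, b, fa.tail hx', fb, rfl⟩
    · obtain ⟨a, b, fa, fb, rfl⟩ := ih x y' rfl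
      exact ⟨a, b, fa, fb.tail hy', rfl⟩

theorem isLeftEnd_add {x y : PGame} : IsLeftEnd (x + y) ↔ IsLeftEnd x ∧ IsLeftEnd y :=
  isEmpty_leftMoves_add_iff x y

theorem isRightEnd_add {x y : PGame} : IsRightEnd (x + y) ↔ IsRightEnd x ∧ IsRightEnd y :=
  isEmpty_rightMoves_add_iff x y

theorem deadLeftEnd_add {x y : PGame} (hx : DeadLeftEnd x) (hy : DeadLeftEnd y) :
    DeadLeftEnd (x + y) := by
  intro F hF
  obtain ⟨a, b, fa, fb, rfl⟩ := follower_add hF x y rfl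
  exact isLeftEnd_add.2 ⟨hx a fa, hy b fb⟩

theorem deadRightEnd_add {x y : PGame} (hx : DeadRightEnd x) (hy : DeadRightEnd y) :
    DeadRightEnd (x + y) := by
  intro F hF
  obtain ⟨a, b, fa, fb, rfl⟩ := follower_add hF x y rfl
  exact isRightEnd_add.2 ⟨hx a fa, hy b fb⟩

theorem deadEnding_add {x y : PGame} (hx : DeadEnding x) (hy : DeadEnding y) :
    DeadEnding (x + y) := by
  intro F hF
  obtain ⟨a, b, fa, fb, rfl⟩ := follower_add hF x y rfl
  constructor
  · intro hL
    obtain ⟨ha, hb⟩ := isLeftEnd_add.1 hL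
    exact deadLeftEnd_add ((hx a fa).1 ha) ((hy b fb).1 hb)
  · intro hR
    obtain ⟨ha, hb⟩ := isRightEnd_add.1 hR
    exact deadRightEnd_add ((hx a fa).2 ha) ((hy b fb).2 hb)

theorem follower_nat {F G : PGame} (h : Follower F G) :
    ∀ j : ℕ, G = natGame j → ∃ k, k ≤ j ∧ F = natGame k := by
  induction h with
  | refl => rintro j rfl; exact ⟨j, le_refl j, rfl⟩
  | tail h1 h2 ih =>
    rintro j rfl
    cases j with
    | zero =>
      cases h2 with
      | moveLeft i => exact i.elim
      | moveRight i => exact i.elim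
    | succ j =>
      cases h2 with
      | moveLeft i =>
        obtain ⟨k, hk, hF⟩ := ih j rfl
        exact ⟨k, by omega, hF⟩
      | moveRight i => exact i.elim

theorem deadEnding_nat (j : ℕ) : DeadEnding (natGame j) := by
  intro F hF
  obtain ⟨k, hk, rfl⟩ := follower_nat hF j rfl
  constructor
  · intro hL
    have hk0 : k = 0 := (isEmpty_left_nat k).1 hL
    subst hk0
    intro F' hF'
    obtain ⟨k', hk', rfl⟩ := follower_nat hF' 0 rfl
    have : k' = 0 := by omega
    subst this
    exact (isEmpty_left_nat 0).2 rfl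
  · intro _
    intro F' hF'
    obtain ⟨k', hk', rfl⟩ := follower_nat hF' k rfl
    exact isEmpty_right_nat k'

theorem follower_lam {F G : PGame} (h : Follower F G) :
    ∀ t : ℕ, (G = lam t ∨ G = natGame 0) → (∃ s, s ≤ t ∧ F = lam s) ∨ F = natGame 0 := by
  induction h with
  | refl =>
    rintro t (rfl | rfl)
    · exact Or.inl ⟨t, le_refl t, rfl⟩
    · exact Or.inr rfl
  | tail h1 h2 ih =>
    rintro t (rfl | rfl)
    · cases t with
      | zero =>
        cases h2 with
        | moveLeft i => rw [lam] at i; exact i.elim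
        | moveRight i => exact ih 0 (Or.inr rfl)
      | succ t =>
        cases h2 with
        | moveLeft i => exact ih (t + 1) (Or.inr rfl)
        | moveRight i =>
          rcases ih t (Or.inl rfl) with ⟨s, hs, hF⟩ | hF
          · exact Or.inl ⟨s, by omega, hF⟩
          · exact Or.inr hF
    · cases h2 with
      | moveLeft i => exact i.elim
      | moveRight i => exact i.elim

theorem deadEnding_lam (t : ℕ) : DeadEnding (lam t) := by
  have hnat0 : ∀ F, Follower F (natGame 0) → F = natGame 0 := by
    intro F hF
    obtain ⟨k, hk, rfl⟩ := follower_nat hF 0 rfl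
    have : k = 0 := by omega
    subst this; rfl
  intro F hF
  rcases follower_lam hF t (Or.inl rfl) with ⟨s, hs, rfl⟩ | rfl
  · constructor
    · intro hL
      have hs0 : s = 0 := (isEmpty_left_lam s).1 hL
      subst hs0
      intro F' hF'
      rcases follower_lam hF' 0 (Or.inl rfl) with ⟨s', hs', rfl⟩ | rfl
      · have : s' = 0 := by omega
        subst this
        exact (isEmpty_left_lam 0).2 rfl
      · exact (isEmpty_left_nat 0).2 rfl
    · intro hR
      exact absurd hR (not_isEmpty_right_lam s)
  · constructor
    · intro _
      intro F' hF'
      rw [hnat0 F' hF']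
      exact (isEmpty_left_nat 0).2 rfl
    · intro _
      intro F' hF'
      rw [hnat0 F' hF']
      exact isEmpty_right_nat 0

theorem X_mem_E (j s : ℕ) : (natGame j + lam s) ∈ E :=
  deadEnding_add (deadEnding_nat j) (deadEnding_lam s)



theorem keyL {c : ℤ} {j s : ℕ} (hcs : c + (j:ℤ) = s) :
    outcome (intGame c + (natGame j + lam s)) = MOutcome.L := by
  have hm := master c j (some s)
  refine outcome_L (hm.1.mpr (Or.inr (Or.inl hcs))) (fun hr => ?_)
  exact ((hm.2.mp hr).2.2) hcs

theorem keyNotL {c : ℤ} {j s : ℕ} (h0 : 0 ≤ c + (j:ℤ)) (hlt : c + (j:ℤ) < (s:ℤ)) :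
    outcome (intGame c + (natGame j + lam s)) ≠ MOutcome.L := by
  refine outcome_ne_L_of_nL (fun hl => ?_)
  rcases (master c j (some s)).1.mp hl with h | h | h <;> omega

theorem keyNotL' {c : ℤ} {j s : ℕ} (hgt : (s:ℤ) < c + (j:ℤ)) :
    outcome (intGame c + (natGame j + lam s)) ≠ MOutcome.L :=
  outcome_ne_L_of_R ((master c j (some s)).2.mpr ⟨by omega, by omega, by omega⟩)

theorem half1 {n m : ℤ} (h : n < m) : ¬ geMod E (intGame n) (intGame m) := by
  intro hge
  have h2 := hge (natGame (-n).toNat + lam (m + ((-n).toNat:ℤ)).toNat) (X_mem_E _ _)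
  rw [keyL (c := m) (by omega)] at h2
  exact not_le_L (keyNotL (by omega) (by omega)) h2

theorem half2 {n m : ℤ} (h : n < m) : ¬ geMod E (intGame m) (intGame n) := by
  intro hge
  have h2 := hge (natGame (1 - n).toNat + lam (n + ((1 - n).toNat:ℤ)).toNat) (X_mem_E _ _)
  rw [keyL (c := n) (by omega)] at h2
  exact not_le_L (keyNotL' (by omega)) h2

theorem stmt8' (n m : ℤ) (h : n ≠ m) :
    ¬ geMod E (intGame n) (intGame m) ∧ ¬ geMod E (intGame m) (intGame n) := by
  rcases lt_or_gt_of_ne h with hlt | hlt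
  · exact ⟨half1 hlt, half2 hlt⟩
  · exact ⟨half2 hlt, half1 hlt⟩


end Aux

end Misere

open Misere SetTheory PGame

/-- distinct integers are incomparable modulo E. -/
theorem stmt8 (n m : ℤ) (h : n ≠ m) :
    ¬ geMod E (intGame n) (intGame m) ∧ ¬ geMod E (intGame m) (intGame n) := by
  exact Misere.Aux.stmt8' n m h
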